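/- Every GL(V)-invariant polynomial function P : C_0(V) × C_1(V) × ⋯ × C_r(V) → ℝ (i.e., a function given by evaluating a multivariate polynomial in the linear coordinates associated to some basis of this finite-dimensional space) is constant. -/

import Mathlib

open scoped BigOperators

/-- The space `C_m(V)` of normal tensors of order `m`. -/
def NormalTensor (V : Type*) [NormedAddCommGroup V] [NormedSpace ℝ V] (m : ℕ) :
    Submodule ℝ (ContinuousMultilinearMap ℝ (fun _ : Fin (m + 2) => V) V) where
  carrier := {T |
    (∀ (v : Fin (m + 2) → V) (σ : Equiv.Perm (Fin (m + 2))),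
        (∀ i : Fin (m + 2), (i : ℕ) < 2 → σ i = i) → T (fun i => v (σ i)) = T v) ∧
    (∀ v : Fin (m + 2) → V,
        ∑ σ : Equiv.Perm (Fin (m + 2)), T (fun i => v (σ i)) = 0)}
  add_mem' := by
    rintro a b ⟨ha1, ha2⟩ ⟨hb1, hb2⟩
    refine ⟨fun v σ hσ => ?_, fun v => ?_⟩
    · simp [ha1 v σ hσ, hb1 v σ hσ]
    · simp [Finset.sum_add_distrib, ha2 v, hb2 v]
  zero_mem' := by
    refine ⟨fun v σ hσ => ?_, fun v => ?_⟩ <;> simp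
  smul_mem' := by
    rintro c a ⟨ha1, ha2⟩
    refine ⟨fun v σ hσ => ?_, fun v => ?_⟩
    · simp [ha1 v σ hσ]
    · simp [← Finset.smul_sum, ha2 v]

set_option synthInstance.maxHeartbeats 800000 in
set_option maxHeartbeats 4000000 in
/-- Every `GL(V)`-invariant polynomial function on `C_0(V) × ⋯ × C_r(V)` — i.e. a
function given by evaluating a multivariate polynomial in the linear coordinates
associated to some basis of this finite-dimensional space — is constant. -/
theorem polynomial_invariant_function_on_normal_tensors_is_constant
    {V : Type*} [NormedAddCommGroup V] [NormedSpace ℝ V] [FiniteDimensional ℝ V]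
    (r : ℕ)
    (P : (∀ m : Fin (r + 1), NormalTensor V m) → ℝ)
    (hP : ∃ (ι : Type) (_ : Fintype ι)
        (b : Module.Basis ι ℝ (∀ m : Fin (r + 1), NormalTensor V m))
        (p : MvPolynomial ι ℝ),
        ∀ T, P T = MvPolynomial.eval (fun i => b.repr T i) p)
    (hinv : ∀ (g : V ≃ₗ[ℝ] V) (T T' : ∀ m : Fin (r + 1), NormalTensor V m),
      (∀ (m : Fin (r + 1)) (v : Fin ((m : ℕ) + 2) → V),
          (T' m).1 v = g ((T m).1 fun i => g.symm (v i))) →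
      P T' = P T) :
    ∃ c : ℝ, ∀ T, P T = c := by

  obtain ⟨ι, _ft, b, p, hp⟩ := hP
  haveI : FiniteDimensional ℝ (∀ m : Fin (r + 1), NormalTensor V m) :=
    Module.Basis.finiteDimensional_of_finite b
  refine ⟨P 0, fun T => ?_⟩
  -- Scaling invariance: P (fun m => s^(m+1) • T m) = P T for s ≠ 0.
  have key : ∀ s : ℝ, s ≠ 0 → P (fun m => s ^ ((m : ℕ) + 1) • T m) = P T := by
    intro s hs
    have hs' : s⁻¹ ≠ 0 := inv_ne_zero hs
    refine hinv (LinearEquiv.smulOfNeZero ℝ V s⁻¹ hs') T _ fun m v => ?_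
    have h1 : ((s ^ ((m : ℕ) + 1) • T m : NormalTensor V m) :
        ContinuousMultilinearMap ℝ (fun _ : Fin ((m : ℕ) + 2) => V) V) v
        = s ^ ((m : ℕ) + 1) • (T m).1 v := rfl
    rw [h1]
    simp only [LinearEquiv.smulOfNeZero_apply, LinearEquiv.smulOfNeZero_symm_apply,
      Units.smul_def, Units.val_inv_eq_inv_val, Units.val_mk0, inv_inv]
    rw [ContinuousMultilinearMap.map_smul_univ]
    rw [Finset.prod_const, Finset.card_univ, Fintype.card_fin, smul_smul]
    congr 1
    rw [pow_succ]
    field_simp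
    ring
  -- Continuity of P.
  have hcont : Continuous P := by
    have hrep : Continuous fun T : (∀ m : Fin (r + 1), NormalTensor V m) =>
        (fun i => b.repr T i : ι → ℝ) := by
      refine continuous_pi fun i => ?_
      exact LinearMap.continuous_of_finiteDimensional
        ((Finsupp.lapply i).comp b.repr.toLinearMap)
    have h2 : Continuous fun T : (∀ m : Fin (r + 1), NormalTensor V m) =>
        MvPolynomial.eval (fun i => b.repr T i) p :=
      p.continuous_eval.comp hrep
    exact h2.congr fun T => (hp T).symm
  -- The scaling curve is continuous.
  have hF : Continuous fun s : ℝ => P (fun m => s ^ ((m : ℕ) + 1) • T m) := by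
    apply hcont.comp
    exact continuous_pi fun m => (continuous_pow ((m : ℕ) + 1)).smul continuous_const
  have h1 : Filter.Tendsto (fun s : ℝ => P (fun m => s ^ ((m : ℕ) + 1) • T m))
      (nhdsWithin 0 {(0 : ℝ)}ᶜ)
      (nhds (P (fun m => ((0 : ℝ)) ^ ((m : ℕ) + 1) • T m))) :=
    (hF.tendsto 0).mono_left nhdsWithin_le_nhds
  have h0 : Filter.Tendsto (fun s : ℝ => P (fun m => s ^ ((m : ℕ) + 1) • T m))
      (nhdsWithin 0 {(0 : ℝ)}ᶜ) (nhds (P T)) := by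
    refine Filter.Tendsto.congr' ?_ tendsto_const_nhds
    filter_upwards [self_mem_nhdsWithin] with s hs
    exact (key s hs).symm
  have heq := tendsto_nhds_unique h1 h0
  have e : (fun m : Fin (r + 1) => ((0 : ℝ)) ^ ((m : ℕ) + 1) • T m)
      = (0 : ∀ m : Fin (r + 1), NormalTensor V m) := by
    funext m
    simp
  rw [e] at heq
  exact heq.symm
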